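/- Let p ⊑_de q in a complete Büchi automaton, let L_⊤ be the set of finite words w with an accepting-state-visiting path p ⇒^w q, and L_⊥ the set of finite words w with some path p ⇒^w q. Then every infinite word in (L_⊥* L_⊤)^ω is accepted from q. -/

import Mathlib

open scoped Classical

universe u v

/-- A (nondeterministic) Büchi automaton. -/
structure BA (A : Type u) (Q : Type v) where
  δ : Q → A → Set Q
  I : Set Q
  F : Set Q

namespace BA

variable {A : Type u} {Q : Type v}

/-- Completeness: every state has a successor on every symbol. -/
def Complete (M : BA A Q) : Prop := ∀ q a, (M.δ q a).Nonempty

/-- `ρ` is a run of `M` over the infinite word `α` (from `ρ 0`). -/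
def IsRun (M : BA A Q) (α : ℕ → A) (ρ : ℕ → Q) : Prop :=
  ∀ i, ρ (i + 1) ∈ M.δ (ρ i) (α i)

/-- `M` accepts `α` from state `q` (some run from `q` visits `F` infinitely often). -/
def AcceptsFrom (M : BA A Q) (q : Q) (α : ℕ → A) : Prop :=
  ∃ ρ, ρ 0 = q ∧ M.IsRun α ρ ∧ ∀ n, ∃ m ≥ n, ρ m ∈ M.F

def LangFrom (M : BA A Q) (q : Q) : Set (ℕ → A) := {α | M.AcceptsFrom q α}

def Lang (M : BA A Q) : Set (ℕ → A) := {α | ∃ q ∈ M.I, M.AcceptsFrom q α}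

/-! ### Simulation games -/

/-- A (positional, total) Duplicator strategy: given Duplicator's current state and
Spoiler's transition `p →a p'`, pick Duplicator's next state, which must be an
`a`-successor of Duplicator's current state. -/
def IsStrategy (M : BA A Q) (σ : Q → Q → A → Q → Q) : Prop :=
  ∀ r p a p', σ r p a p' ∈ M.δ r a

/-- The trace produced by Duplicator following strategy `σ` from `r` against
Spoiler's trace `ρ` over the word `α`. -/
def play (σ : Q → Q → A → Q → Q) (r : Q) (α : ℕ → A) (ρ : ℕ → Q) : ℕ → Q
  | 0 => r
  | i + 1 => σ (play σ r α ρ i) (ρ i) (α i) (ρ (i + 1))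

/-- Direct-simulation winning condition. -/
def CondDi (M : BA A Q) (ρ τ : ℕ → Q) : Prop := ∀ i, ρ i ∈ M.F → τ i ∈ M.F

/-- Delayed-simulation winning condition. -/
def CondDe (M : BA A Q) (ρ τ : ℕ → Q) : Prop := ∀ i, ρ i ∈ M.F → ∃ k ≥ i, τ k ∈ M.F

/-- Fair-simulation winning condition. -/
def CondF (M : BA A Q) (ρ τ : ℕ → Q) : Prop :=
  (∀ n, ∃ m ≥ n, ρ m ∈ M.F) → (∀ n, ∃ m ≥ n, τ m ∈ M.F)

/-- `σ` is winning for Duplicator from configuration `(p, q)` wrt condition `C`. -/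
def WinsFrom (M : BA A Q) (C : (ℕ → Q) → (ℕ → Q) → Prop)
    (σ : Q → Q → A → Q → Q) (p q : Q) : Prop :=
  ∀ α ρ, ρ 0 = p → M.IsRun α ρ → C ρ (play σ q α ρ)

/-- The (maximal) simulation relation given by winning condition `C`. -/
def Sim (M : BA A Q) (C : (ℕ → Q) → (ℕ → Q) → Prop) (p q : Q) : Prop :=
  ∃ σ, M.IsStrategy σ ∧ M.WinsFrom C σ p q

def DiSim (M : BA A Q) : Q → Q → Prop := M.Sim M.CondDi
def DeSim (M : BA A Q) : Q → Q → Prop := M.Sim M.CondDe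
def FairSim (M : BA A Q) : Q → Q → Prop := M.Sim M.CondF

/-! ### Run DAGs and ranks -/

/-- Vertices of the run DAG of `M` over `α`. -/
def DagV (M : BA A Q) (α : ℕ → A) : Set (Q × ℕ) :=
  {v | ∃ ρ, ρ 0 ∈ M.I ∧ M.IsRun α ρ ∧ ρ v.2 = v.1}

/-- The edge relation of the run DAG. -/
def dagStep (M : BA A Q) (α : ℕ → A) (u v : Q × ℕ) : Prop :=
  v.2 = u.2 + 1 ∧ v.1 ∈ M.δ u.1 (α u.2)

/-- Reachability inside a sub-DAG `G`. -/
def reachIn (M : BA A Q) (α : ℕ → A) (G : Set (Q × ℕ)) : Q × ℕ → Q × ℕ → Prop :=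
  Relation.ReflTransGen (fun u v => u ∈ G ∧ v ∈ G ∧ M.dagStep α u v)

/-- A vertex of `G` is finite if it reaches only finitely many vertices inside `G`. -/
def FiniteIn (M : BA A Q) (α : ℕ → A) (G : Set (Q × ℕ)) (v : Q × ℕ) : Prop :=
  v ∈ G ∧ {u | M.reachIn α G v u}.Finite

/-- A vertex of `G` is endangered if it reaches no accepting vertex inside `G`. -/
def EndangeredIn (M : BA A Q) (α : ℕ → A) (G : Set (Q × ℕ)) (v : Q × ℕ) : Prop :=
  v ∈ G ∧ ∀ u, M.reachIn α G v u → u.1 ∉ M.F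

/-- The decreasing sequence of DAGs of the ranking procedure: at even steps remove
the finite vertices, at odd steps remove the endangered vertices. -/
def dagSeq (M : BA A Q) (α : ℕ → A) : ℕ → Set (Q × ℕ)
  | 0 => M.DagV α
  | j + 1 =>
      if Even j then M.dagSeq α j \ {v | M.FiniteIn α (M.dagSeq α j) v}
      else M.dagSeq α j \ {v | M.EndangeredIn α (M.dagSeq α j) v}

/-- The rank of a vertex: the step `j ≤ 2n` at which it is removed in the ranking
procedure, and `ω` (i.e. `⊤`) if it is never removed within `2n + 1` steps. -/
noncomputable def rank (M : BA A Q) (α : ℕ → A) (n : ℕ) (v : Q × ℕ) : ℕ∞ :=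
  if ∃ j ≤ 2 * n, v ∈ M.dagSeq α j ∧ v ∉ M.dagSeq α (j + 1) then
    ((sInf {j | v ∈ M.dagSeq α j ∧ v ∉ M.dagSeq α (j + 1)} : ℕ) : ℕ∞)
  else ⊤

end BA

/-! ### Schewe's rank-based complementation -/

/-- A macrostate `(S, O, f, i)` of the rank-based construction. -/
structure Macro (Q : Type v) where
  S : Set Q
  O : Set Q
  f : Q → ℕ
  i : ℕ

/-- The rank of a level ranking `f`: its maximal value. -/
def rankOf {Q : Type v} [Fintype Q] (f : Q → ℕ) : ℕ := Finset.univ.sup f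

/-- The smallest even number `≥ k`. -/
def rondNat (k : ℕ) : ℕ := if Even k then k else k + 1

/-- The smallest even number `≥ x`, with `⌈ω⌉ = ω`. -/
def rondE (x : ℕ∞) : ℕ∞ := WithTop.map rondNat x

namespace BA

variable {A : Type u} {Q : Type v}

/-- A level ranking: ranks bounded by `2n`, accepting states get even ranks. -/
def LevelRanking (M : BA A Q) (n : ℕ) (f : Q → ℕ) : Prop :=
  (∀ q, f q ≤ 2 * n) ∧ ∀ q ∈ M.F, Even (f q)

/-- `f` is `S`-tight. -/
def STight [Fintype Q] (M : BA A Q) (n : ℕ) (S : Set Q) (f : Q → ℕ) : Prop :=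
  M.LevelRanking n f ∧ Odd (rankOf f) ∧
  (∀ m, Odd m → m ≤ rankOf f → ∃ s ∈ S, f s = m) ∧
  ∀ q ∉ S, f q = 0

/-- Successors of a set of states. -/
def δSet (M : BA A Q) (S : Set Q) (a : A) : Set Q := ⋃ q ∈ S, M.δ q a

/-- Validity of a macrostate, i.e., membership in `Q₂`. -/
def Q2Valid [Fintype Q] (M : BA A Q) (n : ℕ) (m : Macro Q) : Prop :=
  M.STight n m.S m.f ∧ m.O ⊆ m.S ∩ {q | m.f q = m.i} ∧ Even m.i ∧ m.i + 2 ≤ 2 * n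

/-- The `δ₃` successor condition of the rank-based construction, where `cl` is the
closure operator applied to the successor set (use `cl = id` for the plain
construction). -/
def macroSucc [Fintype Q] (M : BA A Q) (cl : Set Q → Set Q) (m m' : Macro Q)
    (a : A) : Prop :=
  m'.S = cl (M.δSet m.S a) ∧
  (∀ q ∈ m.S, ∀ q' ∈ M.δ q a, m'.f q' ≤ m.f q) ∧
  rankOf m'.f = rankOf m.f ∧
  ((m.O = ∅ ∧ m'.i = (m.i + 2) % (rankOf m'.f + 1) ∧ m'.O = {q | m'.f q = m'.i}) ∨
   (m.O ≠ ∅ ∧ m'.i = m.i ∧ m'.O = M.δSet m.O a ∩ {q | m'.f q = m'.i}))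

/-- Schewe's rank-based complement construction, parameterized by a predicate
`keep` selecting which macrostates of `Q₂` are kept (use `fun _ => True` for the
plain construction) and a closure `cl` applied to successor sets (use `id` for
the plain construction). -/
def schewe [Fintype Q] (M : BA A Q) (n : ℕ) (keep : Macro Q → Prop)
    (cl : Set Q → Set Q) : BA A (Set Q ⊕ Macro Q) where
  δ := fun s a =>
    match s with
    | Sum.inl S =>
        {Sum.inl (cl (M.δSet S a))} ∪
        {s' | ∃ m : Macro Q, s' = Sum.inr m ∧ m.S = cl (M.δSet S a) ∧ m.O = ∅ ∧
              m.i = 0 ∧ M.Q2Valid n m ∧ keep m}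
    | Sum.inr m =>
        {s' | ∃ m' : Macro Q, s' = Sum.inr m' ∧ M.macroSucc cl m m' a ∧
              M.Q2Valid n m' ∧ keep m'}
  I := {Sum.inl M.I}
  F := {Sum.inl (∅ : Set Q)} ∪
       {s | ∃ m : Macro Q, s = Sum.inr m ∧ m.O = ∅ ∧ M.Q2Valid n m ∧ keep m}

/-! ### Finite paths, quotients, added transitions -/

/-- Finite path from `p` to `q` over the finite word `w`. -/
inductive Path (M : BA A Q) : Q → List A → Q → Prop
  | nil (q : Q) : Path M q [] q
  | cons {p q r : Q} {a : A} {w : List A} :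
      q ∈ M.δ p a → Path M q w r → Path M p (a :: w) r

/-- Finite path from `p` to `q` over `w` that visits an accepting state. -/
inductive APath (M : BA A Q) : Q → List A → Q → Prop
  | here {p : Q} {w : List A} {q : Q} : p ∈ M.F → Path M p w q → APath M p w q
  | step {p q r : Q} {a : A} {w : List A} :
      q ∈ M.δ p a → APath M q w r → APath M p (a :: w) r

/-- The factor of the infinite word `α` between positions `i` (included) and
`j` (excluded). -/
def wordSeg (α : ℕ → A) (i j : ℕ) : List A := (List.range (j - i)).map fun m => α (i + m)

/-- `α` belongs to the ω-power `L^ω` of the language `L` of finite words. -/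
def InOmegaPow (L : Language A) (α : ℕ → A) : Prop :=
  ∃ t : ℕ → ℕ, t 0 = 0 ∧ StrictMono t ∧ ∀ k, wordSeg α (t k) (t (k + 1)) ∈ L

/-- The automaton `M` with the extra transition `r →a p` added. -/
def addTr (M : BA A Q) (r : Q) (a : A) (p : Q) : BA A Q where
  δ := fun s b => M.δ s b ∪ {x | s = r ∧ b = a ∧ x = p}
  I := M.I
  F := M.F

/-- The quotient automaton of `M` by the equivalence (setoid) `s`. -/
def quotBA (M : BA A Q) (s : Setoid Q) : BA A (Quotient s) where
  δ := fun c a => {c' | ∃ u u', Quotient.mk s u = c ∧ Quotient.mk s u' = c' ∧ u' ∈ M.δ u a}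
  I := {c | ∃ u ∈ M.I, Quotient.mk s u = c}
  F := {c | ∃ u ∈ M.F, Quotient.mk s u = c}

end BA


/-! ### Auxiliary machinery for stmt7 -/

section Stmt7Aux

variable {A : Type u} {Q : Type v}

lemma play_succ' (σ : Q → Q → A → Q → Q) (r : Q) (α : ℕ → A) (ρ : ℕ → Q) (i : ℕ) :
    BA.play σ r α ρ (i + 1) = σ (BA.play σ r α ρ i) (ρ i) (α i) (ρ (i + 1)) := rfl

lemma play_shift' (σ : Q → Q → A → Q → Q) (r : Q) (α : ℕ → A) (ρ : ℕ → Q) (n : ℕ) :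
    ∀ i, BA.play σ r α ρ (n + i) =
      BA.play σ (BA.play σ r α ρ n) (fun m => α (n + m)) (fun m => ρ (n + m)) i
  | 0 => rfl
  | i + 1 => by
    show BA.play σ r α ρ ((n + i) + 1) = _
    rw [play_succ', play_shift' σ r α ρ n i]
    rfl

lemma condDe_shift' (M : BA A Q) {ρ τ : ℕ → Q} (h : M.CondDe ρ τ) (n : ℕ) :
    M.CondDe (fun i => ρ (n + i)) (fun i => τ (n + i)) := by
  intro i hF
  obtain ⟨k, hk, hkF⟩ := h (n + i) hF
  refine ⟨k - n, by omega, ?_⟩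
  have e : n + (k - n) = k := by omega
  simpa [e] using hkF

lemma wordSeg_length' (α : ℕ → A) (i j : ℕ) : (BA.wordSeg α i j).length = j - i := by
  simp [BA.wordSeg]

lemma wordSeg_succ' (α : ℕ → A) (m n : ℕ) :
    BA.wordSeg α m (m + (n + 1)) = α m :: BA.wordSeg α (m + 1) ((m + 1) + n) := by
  simp only [BA.wordSeg, Nat.add_sub_cancel_left, List.range_succ_eq_map, List.map_cons,
    List.map_map, Nat.add_zero, List.cons.injEq, true_and]
  apply List.map_congr_left
  intro i _
  show α (m + Nat.succ i) = α (m + 1 + i)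
  congr 1
  omega

lemma wordSeg_append' (α : ℕ → A) (m a b : ℕ) :
    BA.wordSeg α m (m + (a + b)) =
      BA.wordSeg α m (m + a) ++ BA.wordSeg α (m + a) (m + a + b) := by
  simp only [BA.wordSeg, Nat.add_sub_cancel_left]
  rw [List.range_add, List.map_append, List.map_map]
  congr 1
  apply List.map_congr_left
  intro i _
  simp [Function.comp]
  congr 1
  omega

lemma wordSeg_split' (α : ℕ → A) (m : ℕ) (u y : List A)
    (h : BA.wordSeg α m (m + (u.length + y.length)) = u ++ y) :
    BA.wordSeg α m (m + u.length) = u ∧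
      BA.wordSeg α (m + u.length) (m + u.length + y.length) = y := by
  rw [wordSeg_append'] at h
  exact List.append_inj h (by simp [wordSeg_length'])

lemma pieces_seg' (α : ℕ → A) :
    ∀ (L : List (List A)) (m : ℕ),
      BA.wordSeg α m (m + (L.map List.length).sum) = L.flatten →
      ∀ i, i < L.length →
        BA.wordSeg α (m + ((L.take i).map List.length).sum)
          (m + ((L.take i).map List.length).sum + (L.getD i []).length) = L.getD i [] := by
  intro L
  induction L with
  | nil => intro m _ i hi; simp at hi
  | cons u L IH =>
    intro m h i hi
    have h' : BA.wordSeg α m (m + (u.length + L.flatten.length)) = u ++ L.flatten := by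
      simpa [List.length_flatten] using h
    have hsplit := wordSeg_split' α m u L.flatten h'
    cases i with
    | zero => simpa using hsplit.1
    | succ i =>
      have hpre : BA.wordSeg α (m + u.length) ((m + u.length) + (L.map List.length).sum)
          = L.flatten := by
        have := hsplit.2
        simpa [List.length_flatten] using this
      have := IH (m + u.length) hpre i (by simpa using hi)
      simpa [List.take_succ_cons, ← Nat.add_assoc] using this

lemma apath_path' {M : BA A Q} : ∀ {x : Q} {w : List A} {y : Q},
    M.APath x w y → M.Path x w y := by
  intro x w y h
  induction h with
  | here _ hp => exact hp
  | step hδ _ IH => exact BA.Path.cons hδ IH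

lemma path_toFun' {M : BA A Q} {α : ℕ → A} :
    ∀ {x : Q} {w : List A} {y : Q}, M.Path x w y →
      ∀ m, BA.wordSeg α m (m + w.length) = w →
      ∃ g : ℕ → Q, g 0 = x ∧ g w.length = y ∧
        ∀ i, i < w.length → g (i + 1) ∈ M.δ (g i) (α (m + i)) := by
  intro x w y hp
  induction hp with
  | nil r => intro m _; exact ⟨fun _ => r, rfl, rfl, by simp⟩
  | @cons p₁ q₁ r₁ a w₁ hδ hpath IH =>
    intro m hw
    simp only [List.length_cons] at hw
    rw [wordSeg_succ'] at hw
    injection hw with ha hw'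
    obtain ⟨g, hg0, hgend, hgstep⟩ := IH (m + 1) hw'
    refine ⟨fun n => Nat.casesOn n p₁ g, rfl, ?_, ?_⟩
    · simpa using hgend
    · intro i hi
      cases i with
      | zero =>
        show g 0 ∈ M.δ p₁ (α (m + 0))
        rw [hg0]
        simpa [ha] using hδ
      | succ i =>
        have hi' : i < w₁.length := by simpa using hi
        have := hgstep i hi'
        have e : m + 1 + i = m + (i + 1) := by omega
        rw [e] at this
        exact this

lemma apath_toFun' {M : BA A Q} {α : ℕ → A} :
    ∀ {x : Q} {w : List A} {y : Q}, M.APath x w y →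
      ∀ m, BA.wordSeg α m (m + w.length) = w →
      ∃ g : ℕ → Q, g 0 = x ∧ g w.length = y ∧
        (∀ i, i < w.length → g (i + 1) ∈ M.δ (g i) (α (m + i))) ∧
        ∃ i, i ≤ w.length ∧ g i ∈ M.F := by
  intro x w y hp
  induction hp with
  | @here p₁ w₁ q₁ hF hpath =>
    intro m hw
    obtain ⟨g, hg0, hgend, hgstep⟩ := path_toFun' hpath m hw
    exact ⟨g, hg0, hgend, hgstep, 0, Nat.zero_le _, hg0 ▸ hF⟩
  | @step p₁ q₁ r₁ a w₁ hδ hpath IH =>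
    intro m hw
    simp only [List.length_cons] at hw
    rw [wordSeg_succ'] at hw
    injection hw with ha hw'
    obtain ⟨g, hg0, hgend, hgstep, i₀, hi₀, hi₀F⟩ := IH (m + 1) hw'
    refine ⟨fun n => Nat.casesOn n p₁ g, rfl, ?_, ?_, i₀ + 1, by simpa using hi₀, hi₀F⟩
    · simpa using hgend
    · intro i hi
      cases i with
      | zero =>
        show g 0 ∈ M.δ p₁ (α (m + 0))
        rw [hg0]
        simpa [ha] using hδ
      | succ i =>
        have hi' : i < w₁.length := by simpa using hi
        have := hgstep i hi'
        have e : m + 1 + i = m + (i + 1) := by omega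
        rw [e] at this
        exact this

/-- The "base" spoiler runs: block `j` follows the path fragment `g j` of length
`d j + 1`, then continues as the play of `σ` from `q` against the next base run. -/
def BB (σ : Q → Q → A → Q → Q) (α : ℕ → A) (s d : ℕ → ℕ) (g : ℕ → ℕ → Q) :
    ℕ → ℕ → Q
  | t, j =>
    if h : t ≤ d j + 1 then g j t
    else
      σ (BB σ α s d g (t - 1) j) (BB σ α s d g (t - 1 - (d j + 1)) (j + 1))
        (α (s j + (t - 1))) (BB σ α s d g (t - (d j + 1)) (j + 1))
termination_by t j => t
decreasing_by all_goals omega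

lemma BB_le {σ : Q → Q → A → Q → Q} {α : ℕ → A} {s d : ℕ → ℕ} {g : ℕ → ℕ → Q}
    {t j : ℕ} (h : t ≤ d j + 1) : BB σ α s d g t j = g j t := by
  rw [BB]; simp [h]

lemma BB_gt {σ : Q → Q → A → Q → Q} {α : ℕ → A} {s d : ℕ → ℕ} {g : ℕ → ℕ → Q}
    {t j : ℕ} (h : ¬ t ≤ d j + 1) :
    BB σ α s d g t j =
      σ (BB σ α s d g (t - 1) j) (BB σ α s d g (t - 1 - (d j + 1)) (j + 1))
        (α (s j + (t - 1))) (BB σ α s d g (t - (d j + 1)) (j + 1)) := by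
  rw [BB]; simp [h]

/-- The tower of plays in the stitched delayed-simulation argument. -/
def RR (σ : Q → Q → A → Q → Q) (q : Q) (β : ℕ → ℕ → A) (l : ℕ → ℕ)
    (B : ℕ → ℕ → Q) : ℕ → ℕ → ℕ → Q
  | 0, j => B j
  | k + 1, j =>
      BA.play σ (if k = 0 then q else RR σ q β l B k (j - 1) (l (j - 1))) (β j)
        (RR σ q β l B k j)

end Stmt7Aux

/-- if `p ⊑_de q`, `L_⊤` the accepting-visiting paths `p ⇒ q` and
`L_⊥` all paths `p ⇒ q`, then `(L_⊥* L_⊤)^ω ⊆ L(q)`. -/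
theorem stmt7 {A : Type u} {Q : Type v} (M : BA A Q) (hM : M.Complete)
    (p q : Q) (h : M.DeSim p q)
    (LT LB : Language A)
    (hLT : LT = {w | M.APath p w q}) (hLB : LB = {w | M.Path p w q}) :
    ∀ α : ℕ → A, BA.InOmegaPow (KStar.kstar LB * LT) α → M.AcceptsFrom q α := by
  subst hLT hLB
  obtain ⟨σ, hσ, hw⟩ := h
  intro α hα
  obtain ⟨t, ht0, htm, htseg⟩ := hα
  have htpos : ∀ k, t k < t (k + 1) := fun k => htm (Nat.lt_succ_self k)
  have hwne : ∀ k, BA.wordSeg α (t k) (t (k + 1)) ≠ [] := by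
    intro k hh
    have := congrArg List.length hh
    rw [wordSeg_length'] at this
    simp at this
    have := htpos k
    omega
  -- decompose each segment into nonempty path pieces, at least one accepting-visiting
  have hP : ∀ k, ∃ P : List (List A),
      P.flatten = BA.wordSeg α (t k) (t (k + 1)) ∧ (∀ x ∈ P, x ≠ []) ∧
      (∀ x ∈ P, M.Path p x q) ∧ ∃ x ∈ P, M.APath p x q := by
    intro k
    have hmem := htseg k
    replace hmem := Language.mem_mul.mp hmem
    obtain ⟨u, hu, v, hv, huv⟩ := hmem
    replace hu := Language.mem_kstar.mp hu
    obtain ⟨L, rfl, hL⟩ := hu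
    by_cases hvnil : v = []
    · subst hvnil
      have hpF : p ∈ M.F := by cases hv with | here hF _ => exact hF
      refine ⟨L.filter (fun x => !x.isEmpty), ?_, ?_, ?_, ?_⟩
      · rw [List.flatten_filter_not_isEmpty]
        simpa using huv
      · intro x hx
        have := List.of_mem_filter hx
        simpa using this
      · intro x hx
        exact hL x (List.mem_of_mem_filter hx)
      · have hne : (L.filter (fun x => !x.isEmpty)) ≠ [] := by
          intro hnil
          apply hwne k
          rw [← (by simpa using huv : L.flatten = BA.wordSeg α (t k) (t (k + 1)))]
          rw [← List.flatten_filter_not_isEmpty (L := L), hnil]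
          rfl
        obtain ⟨x, hx⟩ := List.exists_mem_of_ne_nil _ hne
        exact ⟨x, hx, BA.APath.here hpF (hL x (List.mem_of_mem_filter hx))⟩
    · refine ⟨L.filter (fun x => !x.isEmpty) ++ [v], ?_, ?_, ?_, ?_⟩
      · rw [List.flatten_append, List.flatten_filter_not_isEmpty]
        simpa using huv
      · intro x hx
        rcases List.mem_append.mp hx with hx | hx
        · have := List.of_mem_filter hx
          simpa using this
        · simp at hx; subst hx; exact hvnil
      · intro x hx
        rcases List.mem_append.mp hx with hx | hx
        · exact hL x (List.mem_of_mem_filter hx)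
        · simp at hx; subst hx; exact apath_path' hv
      · exact ⟨v, by simp, hv⟩
  choose P hPjoin hPne hPpath hPap using hP
  -- positions of pieces
  obtain ⟨segStart, hseg0, hsegS⟩ :
      ∃ f : ℕ → ℕ, f 0 = 0 ∧ ∀ k, f (k + 1) = f k + (P k).length :=
    ⟨fun k => ((List.range k).map fun k' => (P k').length).sum, by simp,
      fun k => by simp [List.range_succ]⟩
  have hPlen : ∀ k, 0 < (P k).length := by
    intro k
    rcases Nat.eq_zero_or_pos (P k).length with h0 | h0
    · exfalso
      apply hwne k
      rw [← hPjoin k, List.length_eq_zero_iff.mp h0]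
      rfl
    · exact h0
  have hsegmono : ∀ k k', k ≤ k' → segStart k ≤ segStart k' := by
    intro k k' hk
    induction k' with
    | zero =>
      have e : k = 0 := by omega
      rw [e]
    | succ k' IH =>
      rcases Nat.lt_or_ge k (k' + 1) with hlt | hge
      · have := IH (by omega)
        rw [hsegS]
        omega
      · have e : k = k' + 1 := by omega
        rw [e]
  have hsegstrict : ∀ k, segStart k < segStart (k + 1) := by
    intro k; rw [hsegS]; have := hPlen k; omega
  have hsegge : ∀ k, k ≤ segStart k := by
    intro k
    induction k with
    | zero => omega
    | succ k IH => have := hsegstrict k; omega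
  have hex : ∀ j, ∃ k, j < segStart (k + 1) := by
    intro j
    exact ⟨j, by have := hsegge (j + 1); omega⟩
  obtain ⟨idx, hidx1, hidx2⟩ :
      ∃ f : ℕ → ℕ, (∀ j, j < segStart (f j + 1)) ∧ (∀ j, segStart (f j) ≤ j) := by
    refine ⟨fun j => Nat.find (hex j), fun j => Nat.find_spec (hex j), ?_⟩
    intro j
    show segStart (Nat.find (hex j)) ≤ j
    rcases Nat.eq_zero_or_pos (Nat.find (hex j)) with h0 | h0
    · rw [h0, hseg0]; omega
    · have hmin := Nat.find_min (hex j)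
        (show Nat.find (hex j) - 1 < Nat.find (hex j) by omega)
      have e : Nat.find (hex j) - 1 + 1 = Nat.find (hex j) := by omega
      rw [e] at hmin
      omega
  have hidxuniq : ∀ j k, segStart k ≤ j → j < segStart (k + 1) → idx j = k := by
    intro j k h1 h2
    rcases Nat.lt_trichotomy (idx j) k with hlt | he | hgt
    · exfalso
      have : segStart (idx j + 1) ≤ segStart k := hsegmono _ _ (by omega)
      have := hidx1 j
      omega
    · exact he
    · exfalso
      have : segStart (k + 1) ≤ segStart (idx j) := hsegmono _ _ (by omega)
      have := hidx2 j
      omega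
  have hij : ∀ j, j - segStart (idx j) < (P (idx j)).length := by
    intro j
    have h1 := hidx1 j
    have h2 := hidx2 j
    rw [hsegS] at h1
    omega
  obtain ⟨piece, hpieceq⟩ :
      ∃ f : ℕ → List A, ∀ j, f j = (P (idx j)).getD (j - segStart (idx j)) [] :=
    ⟨_, fun _ => rfl⟩
  have hpiece_mem : ∀ j, piece j ∈ P (idx j) := by
    intro j
    rw [hpieceq j, List.getD_eq_getElem _ _ (hij j)]
    exact List.getElem_mem _
  have htsum : ∀ k, t (k + 1) = t k + ((P k).map List.length).sum := by
    intro k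
    have h1 : ((P k).map List.length).sum = (P k).flatten.length :=
      List.length_flatten.symm
    rw [hPjoin k, wordSeg_length'] at h1
    have := htpos k
    omega
  obtain ⟨s, hseq⟩ :
      ∃ f : ℕ → ℕ, ∀ j, f j =
        t (idx j) + (((P (idx j)).take (j - segStart (idx j))).map List.length).sum :=
    ⟨_, fun _ => rfl⟩
  have hidx0 : idx 0 = 0 := hidxuniq 0 0 (by rw [hseg0]) (by have := hsegstrict 0; omega)
  have hs0 : s 0 = 0 := by
    rw [hseq 0, hidx0, hseg0]
    simp [ht0]
  have hsum_take_succ : ∀ (L : List (List A)) (i : ℕ), i < L.length →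
      ((L.take (i + 1)).map List.length).sum
        = ((L.take i).map List.length).sum + (L.getD i []).length := by
    intro L
    induction L with
    | nil => intro i hi; simp at hi
    | cons u L IH =>
      intro i hi
      cases i with
      | zero => simp
      | succ i =>
        have := IH i (by simpa using hi)
        simp only [List.take_succ_cons, List.map_cons, List.sum_cons, List.getD_cons_succ]
        omega
  have hstep : ∀ j, s (j + 1) = s j + (piece j).length := by
    intro j
    have h1 := hsum_take_succ (P (idx j)) (j - segStart (idx j)) (hij j)
    rcases Nat.lt_or_ge (j + 1) (segStart (idx j + 1)) with hlt | hge
    · have hidx' : idx (j + 1) = idx j :=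
        hidxuniq _ _ (le_trans (hidx2 j) (Nat.le_succ j)) hlt
      have hij' : (j + 1) - segStart (idx j) = (j - segStart (idx j)) + 1 := by
        have := hidx2 j; omega
      rw [hseq (j + 1), hseq j, hpieceq j, hidx', hij', h1]
      omega
    · have heq : j + 1 = segStart (idx j + 1) := by have := hidx1 j; omega
      have hfull : j - segStart (idx j) + 1 = (P (idx j)).length := by
        have := hidx2 j
        rw [hsegS] at heq
        omega
      have hidx' : idx (j + 1) = idx j + 1 :=
        hidxuniq _ _ (by omega) (by have := hsegstrict (idx j + 1); omega)
      have hzero : (j + 1) - segStart (idx j + 1) = 0 := by omega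
      have h2 : (P (idx j)).take ((j - segStart (idx j)) + 1) = P (idx j) := by
        rw [hfull]; exact List.take_length
      have h3 : ((P (idx j)).map List.length).sum
          = (((P (idx j)).take ((j - segStart (idx j)) + 1)).map List.length).sum := by
        rw [h2]
      rw [hseq (j + 1), hseq j, hpieceq j, hidx', hzero, htsum (idx j)]
      simp only [List.take_zero, List.map_nil, List.sum_nil]
      omega
  have hword : ∀ j, BA.wordSeg α (s j) (s j + (piece j).length) = piece j := by
    intro j
    have hpre : BA.wordSeg α (t (idx j))
        (t (idx j) + ((P (idx j)).map List.length).sum) = (P (idx j)).flatten := by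
      rw [← htsum]
      exact (hPjoin _).symm
    have := pieces_seg' α (P (idx j)) (t (idx j)) hpre (j - segStart (idx j)) (hij j)
    rw [hseq j, hpieceq j]
    exact this
  have hpne : ∀ j, piece j ≠ [] := fun j => hPne _ _ (hpiece_mem j)
  have hlpos : ∀ j, 0 < (piece j).length := fun j => List.length_pos_iff.mpr (hpne j)
  have hpath : ∀ j, M.Path p (piece j) q := fun j => hPpath _ _ (hpiece_mem j)
  have hinfAP : ∀ n, ∃ j, n ≤ j ∧ M.APath p (piece j) q := by
    intro n
    obtain ⟨x, hxP, hxAP⟩ := hPap (idx n + 1)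
    obtain ⟨i, hi, hxi⟩ := List.mem_iff_getElem.mp hxP
    refine ⟨segStart (idx n + 1) + i, ?_, ?_⟩
    · have := hidx1 n; omega
    · have hidx' : idx (segStart (idx n + 1) + i) = idx n + 1 :=
        hidxuniq _ _ (Nat.le_add_right _ _) (by rw [hsegS (idx n + 1)]; omega)
      have hpe : piece (segStart (idx n + 1) + i) = x := by
        rw [hpieceq, hidx']
        have hsub : segStart (idx n + 1) + i - segStart (idx n + 1) = i := by omega
        rw [hsub, List.getD_eq_getElem _ _ hi, hxi]
      rw [hpe]
      exact hxAP
  -- run fragments for blocks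
  have hg : ∀ j, ∃ g : ℕ → Q, g 0 = p ∧ g (piece j).length = q ∧
      (∀ i, i < (piece j).length → g (i + 1) ∈ M.δ (g i) (α (s j + i))) ∧
      (M.APath p (piece j) q → ∃ i, i ≤ (piece j).length ∧ g i ∈ M.F) := by
    intro j
    by_cases hAP : M.APath p (piece j) q
    · obtain ⟨g, h1, h2, h3, i, hi, hiF⟩ := apath_toFun' hAP (s j) (hword j)
      exact ⟨g, h1, h2, h3, fun _ => ⟨i, hi, hiF⟩⟩
    · obtain ⟨g, h1, h2, h3⟩ := path_toFun' (hpath j) (s j) (hword j)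
      exact ⟨g, h1, h2, h3, fun hh => absurd hh hAP⟩
  choose g hg0 hgend hgstep hgF using hg
  obtain ⟨d, hd1⟩ : ∃ d : ℕ → ℕ, ∀ j, d j + 1 = (piece j).length :=
    ⟨fun j => (piece j).length - 1, fun j => by
      show (piece j).length - 1 + 1 = (piece j).length
      have := hlpos j; omega⟩
  obtain ⟨Bf, hBf⟩ : ∃ B : ℕ → ℕ → Q, ∀ j tt, B j tt = BB σ α s d g tt j :=
    ⟨_, fun _ _ => rfl⟩
  have hBle : ∀ j tt, tt ≤ d j + 1 → Bf j tt = g j tt := by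
    intro j tt hle
    rw [hBf]
    exact BB_le hle
  have hBgt : ∀ j tt, ¬ tt ≤ d j + 1 →
      Bf j tt = σ (Bf j (tt - 1)) (Bf (j + 1) (tt - 1 - (d j + 1)))
        (α (s j + (tt - 1))) (Bf (j + 1) (tt - (d j + 1))) := by
    intro j tt hgt
    rw [hBf, hBf, hBf, hBf]
    exact BB_gt hgt
  have hBrun : ∀ j tt, Bf j (tt + 1) ∈ M.δ (Bf j tt) (α (s j + tt)) := by
    intro j tt
    rcases le_or_gt (tt + 1) (d j + 1) with hle | hgt
    · rw [hBle j (tt + 1) hle, hBle j tt (by omega)]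
      exact hgstep j tt (by have := hd1 j; omega)
    · rw [hBgt j (tt + 1) (by omega)]
      simp only [Nat.add_sub_cancel]
      exact hσ _ _ _ _
  have hB0 : ∀ j, Bf j 0 = p := by
    intro j
    rw [hBle j 0 (by omega)]
    exact hg0 j
  have hBq : ∀ j, Bf j (d j + 1) = q := by
    intro j
    rw [hBle j (d j + 1) le_rfl, hd1 j]
    exact hgend j
  obtain ⟨βf, hβq⟩ : ∃ β : ℕ → ℕ → A, ∀ j m, β j m = α (s j + m) :=
    ⟨_, fun _ _ => rfl⟩
  have hBshift : ∀ j i, Bf j (d j + 1 + i) = BA.play σ q (βf (j + 1)) (Bf (j + 1)) i := by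
    intro j i
    induction i with
    | zero => exact hBq j
    | succ i IH =>
      have h1 : Bf j (d j + 1 + i + 1)
          = σ (Bf j (d j + 1 + i)) (Bf (j + 1) i) (α (s j + (d j + 1 + i)))
              (Bf (j + 1) (i + 1)) := by
        have hh := hBgt j (d j + 1 + i + 1) (by omega)
        rw [show d j + 1 + i + 1 - 1 - (d j + 1) = i by omega,
          show d j + 1 + i + 1 - (d j + 1) = i + 1 by omega,
          show d j + 1 + i + 1 - 1 = d j + 1 + i by omega] at hh
        exact hh
      have e : α (s j + (d j + 1 + i)) = βf (j + 1) i := by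
        rw [hβq]
        congr 1
        have := hstep j
        have := hd1 j
        omega
      show Bf j (d j + 1 + i + 1) = _
      rw [h1, IH, e, play_succ']
  obtain ⟨Rt, hRt⟩ : ∃ R, R = RR σ q βf (fun j => d j + 1) Bf := ⟨_, rfl⟩
  have hR0 : ∀ j, Rt 0 j = Bf j := by intro j; rw [hRt]; rfl
  have hRS1 : ∀ j, Rt 1 j = BA.play σ q (βf j) (Rt 0 j) := by
    intro j; rw [hRt]; rfl
  have hRSS : ∀ k j, Rt (k + 2) j
      = BA.play σ (Rt (k + 1) (j - 1) (d (j - 1) + 1)) (βf j) (Rt (k + 1) j) := by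
    intro k j; rw [hRt]; rfl
  have ha : ∀ k j i, Rt k j (d j + 1 + i) = Rt (k + 1) (j + 1) i := by
    intro k
    induction k with
    | zero =>
      intro j i
      show Rt 0 j (d j + 1 + i) = Rt 1 (j + 1) i
      rw [hR0 j, hRS1 (j + 1), hR0 (j + 1)]
      exact hBshift j i
    | succ k IH =>
      intro j i
      obtain ⟨c, hcj⟩ : ∃ c, Rt (k + 1) j = BA.play σ c (βf j) (Rt k j) := by
        cases k with
        | zero => exact ⟨q, hRS1 j⟩
        | succ k' => exact ⟨_, hRSS k' j⟩
      have h2 := hRSS k (j + 1)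
      simp only [Nat.add_sub_cancel] at h2
      have hβ : (fun m => βf j (d j + 1 + m)) = βf (j + 1) := by
        funext m
        rw [hβq, hβq]
        congr 1
        have := hstep j
        have := hd1 j
        omega
      have hρ : (fun m => Rt k j (d j + 1 + m)) = Rt (k + 1) (j + 1) :=
        funext fun m => IH j m
      calc Rt (k + 1) j (d j + 1 + i)
          = BA.play σ c (βf j) (Rt k j) (d j + 1 + i) := by rw [hcj]
        _ = BA.play σ (BA.play σ c (βf j) (Rt k j) (d j + 1))
              (fun m => βf j (d j + 1 + m)) (fun m => Rt k j (d j + 1 + m)) i :=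
            play_shift' σ c (βf j) (Rt k j) (d j + 1) i
        _ = BA.play σ (Rt (k + 1) j (d j + 1)) (βf (j + 1)) (Rt (k + 1) (j + 1)) i := by
            rw [hβ, hρ, ← hcj]
        _ = Rt (k + 2) (j + 1) i := by rw [← h2]
  obtain ⟨τ, hτ⟩ : ∃ τ : ℕ → Q, τ = Rt 1 0 := ⟨_, rfl⟩
  have hτ0 : τ 0 = q := by rw [hτ, hRS1 0]; rfl
  have hτrun : M.IsRun α τ := by
    intro i
    have e : βf 0 i = α i := by rw [hβq, hs0, Nat.zero_add]
    rw [hτ, hRS1 0, ← e, play_succ']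
    exact hσ _ _ _ _
  have hb : ∀ j i, τ (s j + i) = Rt (j + 1) j i := by
    intro j
    induction j with
    | zero =>
      intro i
      have e : s 0 + i = i := by rw [hs0, Nat.zero_add]
      rw [e, hτ]
    | succ j IH =>
      intro i
      have e : s (j + 1) + i = s j + (d j + 1 + i) := by
        have := hstep j; have := hd1 j; omega
      rw [e, IH (d j + 1 + i)]
      exact ha (j + 1) j i
  have hc : ∀ k m, M.CondDe (Rt k (m + k)) (Rt (k + 1) (m + k)) := by
    intro k
    induction k with
    | zero =>
      intro m
      have hrun : M.IsRun (βf m) (Bf m) := by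
        intro i
        rw [hβq m i]
        exact hBrun m i
      have hcd := hw (βf m) (Bf m) (hB0 m) hrun
      show M.CondDe (Rt 0 m) (Rt 1 m)
      rw [hR0 m, hRS1 m, hR0 m]
      exact hcd
    | succ k IH =>
      intro m
      have H := condDe_shift' M (IH m) (d (m + k) + 1)
      have e1 : (fun i => Rt k (m + k) (d (m + k) + 1 + i)) = Rt (k + 1) (m + k + 1) := by
        funext i; exact ha k (m + k) i
      have e2 : (fun i => Rt (k + 1) (m + k) (d (m + k) + 1 + i))
          = Rt (k + 2) (m + k + 1) := by
        funext i; exact ha (k + 1) (m + k) i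
      rw [e1, e2] at H
      exact H
  have hsge : ∀ j, j ≤ s j := by
    intro j
    induction j with
    | zero => omega
    | succ j IH =>
      have := hstep j
      have := hlpos j
      omega
  refine ⟨τ, hτ0, hτrun, ?_⟩
  intro n
  obtain ⟨j, hjn, hjAP⟩ := hinfAP n
  obtain ⟨i0, hi0le, hi0F⟩ := hgF j hjAP
  have hbase : Rt 0 j i0 ∈ M.F := by
    rw [hR0, hBle j i0 (by have := hd1 j; omega)]
    exact hi0F
  have hchain : ∀ k, k ≤ j + 1 → ∃ i, Rt k j i ∈ M.F := by
    intro k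
    induction k with
    | zero => intro _; exact ⟨i0, hbase⟩
    | succ k IH =>
      intro hk
      obtain ⟨i, hiF⟩ := IH (by omega)
      have hcd := hc k (j - k)
      have ej : j - k + k = j := by omega
      rw [ej] at hcd
      obtain ⟨i', _, hi'F⟩ := hcd i hiF
      exact ⟨i', hi'F⟩
  obtain ⟨i, hiF⟩ := hchain (j + 1) le_rfl
  refine ⟨s j + i, ?_, ?_⟩
  · have := hsge j; omega
  · rw [hb j i]; exact hiF
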